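/- Let i, j, k, m₁, m₂ be positive integers with m₁ ≤ min(i,j) and m₂ ≤ min(j,k). Then B^{m₁}_{i,j} B^{m₂}_{j,k} = B^{min(m₁,m₂)}_{i,k}. -/

import Mathlib

open Matrix

/-- `B^m_{i,j}`: the `i × j` real matrix whose upper-left `m × m` block is
`B_m = I_m − J_m/m` and whose remaining entries are `0`. -/
noncomputable def Bblock (m i j : ℕ) : Matrix (Fin i) (Fin j) ℝ :=
  Matrix.of fun a b =>
    if (a : ℕ) < m ∧ (b : ℕ) < m then
      (if (a : ℕ) = (b : ℕ) then 1 else 0) - 1 / (m : ℝ)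
    else 0

open Finset in
lemma Bkey (m₁ m₂ a c : ℕ) (ha : a < m₁) (hc : c < m₂) (hm₁ : 0 < m₁) (hm₂ : 0 < m₂) :
    ∑ n ∈ Finset.range (min m₁ m₂),
      ((if a = n then (1:ℝ) else 0) - 1/(m₁:ℝ)) * ((if n = c then (1:ℝ) else 0) - 1/(m₂:ℝ))
    = if a < min m₁ m₂ ∧ c < min m₁ m₂ then
        (if a = c then (1:ℝ) else 0) - 1/((min m₁ m₂ : ℕ) : ℝ) else 0 := by
  have e : ∀ n ∈ Finset.range (min m₁ m₂),
      ((if a = n then (1:ℝ) else 0) - 1/(m₁:ℝ)) * ((if n = c then (1:ℝ) else 0) - 1/(m₂:ℝ))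
      = (if a = n then (if n = c then (1:ℝ) else 0) else 0)
        - (1/(m₂:ℝ)) * (if a = n then 1 else 0)
        - (1/(m₁:ℝ)) * (if n = c then 1 else 0) + 1/(m₁:ℝ) * (1/(m₂:ℝ)) := by
    intro n _
    by_cases h1 : a = n <;> by_cases h2 : n = c
    · simp [h1, h2]; try ring
    · subst h1; simp [h2]; try ring
    · subst h2; simp [h1, Ne.symm h1]; try ring
    · simp [h1, h2]; try ring
  rw [Finset.sum_congr rfl e]
  simp only [Finset.sum_add_distrib, Finset.sum_sub_distrib, ← Finset.mul_sum,
    Finset.sum_ite_eq, Finset.sum_const, Finset.mem_range, nsmul_eq_mul]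
  have hsc : ∑ n ∈ Finset.range (min m₁ m₂), (if n = c then (1:ℝ) else 0)
      = if c < min m₁ m₂ then (1:ℝ) else 0 := by
    rw [Finset.sum_ite_eq' (Finset.range (min m₁ m₂)) c (fun _ => (1:ℝ))]
    simp
  rw [hsc]
  have hm1 : (0:ℝ) < m₁ := by exact_mod_cast hm₁
  have hm2 : (0:ℝ) < m₂ := by exact_mod_cast hm₂
  rcases le_total m₁ m₂ with h | h
  · have hmin : min m₁ m₂ = m₁ := min_eq_left h
    rw [hmin]
    have hc' : c < m₂ := hc
    by_cases hcm : c < m₁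
    · simp only [ha, hcm, if_pos, and_self, if_true]
      have : (m₁:ℝ) ≤ m₂ := by exact_mod_cast h
      by_cases hac : a = c <;> simp [hac] <;> field_simp <;> ring
    · simp only [ha, hcm, if_true, if_false, and_false, if_neg]
      have hac : a ≠ c := by omega
      simp [hac, ha]
      field_simp
      ring
  · have hmin : min m₁ m₂ = m₂ := min_eq_right h
    rw [hmin]
    by_cases ham : a < m₂
    · simp only [ham, hc, if_pos, and_self, if_true]
      by_cases hac : a = c <;> simp [hac] <;> field_simp <;> ring
    · have hac : a ≠ c := by omega
      simp [hac, ham, hc]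
      field_simp
      ring

/-- `B^{m₁}_{i,j} B^{m₂}_{j,k} = B^{min(m₁,m₂)}_{i,k}`. -/
theorem Bblock_mul_Bblock
    (i j k m₁ m₂ : ℕ) (hi : 0 < i) (hj : 0 < j) (hk : 0 < k)
    (hm₁ : 0 < m₁) (hm₂ : 0 < m₂)
    (h₁ : m₁ ≤ min i j) (h₂ : m₂ ≤ min j k) :
    Bblock m₁ i j * Bblock m₂ j k = Bblock (min m₁ m₂) i k := by
  ext a c
  rw [Matrix.mul_apply]
  simp only [Bblock, Matrix.of_apply]
  by_cases ha : (a:ℕ) < m₁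
  · by_cases hc : (c:ℕ) < m₂
    · -- main case
      have hstep : ∀ b : Fin j,
          (if (a:ℕ) < m₁ ∧ (b:ℕ) < m₁ then (if (a:ℕ) = (b:ℕ) then (1:ℝ) else 0) - 1/(m₁:ℝ) else 0) *
          (if (b:ℕ) < m₂ ∧ (c:ℕ) < m₂ then (if (b:ℕ) = (c:ℕ) then (1:ℝ) else 0) - 1/(m₂:ℝ) else 0)
          = (fun n : ℕ => if n < min m₁ m₂ then
              ((if (a:ℕ) = n then (1:ℝ) else 0) - 1/(m₁:ℝ)) * ((if n = (c:ℕ) then (1:ℝ) else 0) - 1/(m₂:ℝ))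
              else 0) (b:ℕ) := by
        intro b
        by_cases hb1 : (b:ℕ) < m₁ <;> by_cases hb2 : (b:ℕ) < m₂ <;>
          simp [ha, hc, hb1, hb2, lt_min_iff]
      have hconv := Fin.sum_univ_eq_sum_range (fun n : ℕ => if n < min m₁ m₂ then
              ((if (a:ℕ) = n then (1:ℝ) else 0) - 1/(m₁:ℝ)) * ((if n = (c:ℕ) then (1:ℝ) else 0) - 1/(m₂:ℝ))
              else 0) j
      rw [Finset.sum_congr rfl (fun b _ => hstep b), hconv]
      have hsub : Finset.range (min m₁ m₂) ⊆ Finset.range j := by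
        apply Finset.range_subset_range.mpr; omega
      rw [← Finset.sum_subset hsub (by intro n _ hn; rw [if_neg]; simp only [Finset.mem_range, not_lt] at hn; omega)]
      rw [Finset.sum_congr rfl (fun n hn => if_pos (Finset.mem_range.mp hn))]
      exact Bkey m₁ m₂ a c ha hc hm₁ hm₂
    · -- c not in block: RHS 0, all summands have second factor 0
      have : ¬ ((a:ℕ) < min m₁ m₂ ∧ (c:ℕ) < min m₁ m₂) := by
        rintro ⟨_, h⟩; exact hc (h.trans_le (min_le_right _ _))
      rw [if_neg this, Finset.sum_eq_zero]
      intro b _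
      have : ¬ ((b:ℕ) < m₂ ∧ (c:ℕ) < m₂) := by tauto
      rw [if_neg this, mul_zero]
  · have : ¬ ((a:ℕ) < min m₁ m₂ ∧ (c:ℕ) < min m₁ m₂) := by
      rintro ⟨h, _⟩; exact ha (h.trans_le (min_le_left _ _))
    rw [if_neg this, Finset.sum_eq_zero]
    intro b _
    rw [if_neg (by tauto), zero_mul]
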